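/- For every j ∈ {0,1,…,k-2} one has (α_k - α_j)/(α_k - α_{j+1}) ≤ 4 (note α_k = π). -/

import Mathlib

open Real MeasureTheory intervalIntegral

lemma aux_inv_sqrt_intInt01 : IntervalIntegrable (fun s : ℝ => 1 / Real.sqrt (1 - s ^ 2)) volume 0 1 := by
  have hmeas : Measurable (fun s : ℝ => 1 / Real.sqrt (1 - s ^ 2)) := by
    simp only [one_div]
    exact ((continuous_const.sub (continuous_pow 2)).sqrt.measurable).inv
  have hb : IntervalIntegrable (fun s : ℝ => (1 - s) ^ (-(2⁻¹) : ℝ)) volume 0 1 := by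
    have h := intervalIntegrable_rpow' (a := 0) (b := 1) (r := -(2⁻¹)) (by norm_num)
    simpa using (h.comp_sub_left 1).symm
  apply hb.mono_fun' (hmeas.aestronglyMeasurable)
  filter_upwards [ae_restrict_mem measurableSet_uIoc] with x hx
  rw [Set.uIoc_of_le (by norm_num : (0:ℝ) ≤ 1)] at hx
  have hx0 : 0 < x := hx.1
  have hx1 : x ≤ 1 := hx.2
  have h1x : (0:ℝ) ≤ 1 - x := by linarith
  have hrw : (1 - x) ^ (-(2⁻¹) : ℝ) = (Real.sqrt (1 - x))⁻¹ := by
    rw [Real.rpow_neg h1x, Real.sqrt_eq_rpow]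
    norm_num
  rw [hrw, Real.norm_eq_abs, abs_of_nonneg (by positivity), one_div]
  have hle : 1 - x ≤ 1 - x ^ 2 := by nlinarith
  rcases eq_or_lt_of_le hx1 with h | h
  · subst h; simp
  · exact inv_anti₀ (Real.sqrt_pos.2 (by linarith)) (Real.sqrt_le_sqrt hle)

lemma aux_inv_sqrt_intInt : IntervalIntegrable (fun s : ℝ => 1 / Real.sqrt (1 - s ^ 2)) volume (-1) 1 := by
  have h10 : IntervalIntegrable (fun s : ℝ => 1 / Real.sqrt (1 - s ^ 2)) volume (-1) 0 := by
    have := (IntervalIntegrable.iff_comp_neg).mp aux_inv_sqrt_intInt01.symm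
    simpa using this
  exact h10.trans aux_inv_sqrt_intInt01

lemma aux_arcsin_integral {a b : ℝ} (ha : -1 ≤ a) (hab : a ≤ b) (hb : b ≤ 1) :
    ∫ s in a..b, 1 / Real.sqrt (1 - s ^ 2) = Real.arcsin b - Real.arcsin a := by
  apply intervalIntegral.integral_eq_sub_of_hasDeriv_right_of_le hab
    (Real.continuous_arcsin.continuousOn)
  · intro x hx
    exact (Real.hasDerivAt_arcsin (by rcases hx with ⟨h1, h2⟩; intro h; rw [h] at h1; linarith)
      (by rcases hx with ⟨h1, h2⟩; intro h; rw [h] at h2; linarith)).hasDerivWithinAt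
  · apply aux_inv_sqrt_intInt.mono_set
    rw [Set.uIcc_of_le hab, Set.uIcc_of_le (by norm_num : (-1:ℝ) ≤ 1)]
    exact Set.Icc_subset_Icc ha hb

lemma aux_H_integral {c d : ℝ} (hc : -1 < c) (hcd : c ≤ d) (hd : d < 1) :
    ∫ s in c..d, (1 + s) / Real.sqrt (1 - s ^ 2)
      = (Real.arcsin d - Real.sqrt (1 - d ^ 2)) - (Real.arcsin c - Real.sqrt (1 - c ^ 2)) := by
  have hmem : ∀ x ∈ Set.uIcc c d, -1 < x ∧ x < 1 := by
    intro x hx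
    rw [Set.uIcc_of_le hcd] at hx
    exact ⟨lt_of_lt_of_le hc hx.1, lt_of_le_of_lt hx.2 hd⟩
  apply intervalIntegral.integral_eq_sub_of_hasDerivAt
  · intro x hx
    obtain ⟨h1, h2⟩ := hmem x hx
    have hpos : 0 < 1 - x ^ 2 := by nlinarith
    have hsq : HasDerivAt (fun s : ℝ => Real.sqrt (1 - s ^ 2))
        (1 / (2 * Real.sqrt (1 - x ^ 2)) * (-((2:ℕ) * x ^ (2 - 1)))) x :=
      (Real.hasDerivAt_sqrt (ne_of_gt hpos)).comp x
        ((hasDerivAt_pow 2 x).const_sub 1)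
    have harc := Real.hasDerivAt_arcsin (by linarith) (ne_of_lt h2)
    have := harc.sub hsq
    convert this using 1
    · rfl
    have hs : Real.sqrt (1 - x ^ 2) ≠ 0 := ne_of_gt (Real.sqrt_pos.2 hpos)
    norm_num
    field_simp
  · apply ContinuousOn.intervalIntegrable
    apply ContinuousOn.div ((continuous_const.add continuous_id).continuousOn)
      ((continuous_const.sub (continuous_pow 2)).sqrt.continuousOn)
    intro x hx
    obtain ⟨h1, h2⟩ := hmem x hx
    exact ne_of_gt (Real.sqrt_pos.2 (by show (0:ℝ) < 1 - x ^ 2; nlinarith))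

set_option maxHeartbeats 1000000 in
theorem stmt_11 (k : ℕ) (hk : 2 ≤ k) (g : ℝ → ℝ)
    (hg0 : ∀ x ∈ Set.Icc (-1:ℝ) 1, 0 ≤ g x)
    (hgmono : MonotoneOn g (Set.Icc (-1:ℝ) 1))
    (hgconc : ConcaveOn ℝ (Set.Icc (-1:ℝ) 1) g)
    (hgconv : ConvexOn ℝ (Set.Ioo (-1:ℝ) 1) (fun s => g s / (1 + s)))
    (hnorm : (1 / π) * ∫ s in (-1:ℝ)..1, g s / Real.sqrt (1 - s ^ 2) = 1)
    (t : ℕ → ℝ)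
    (ht0 : t 0 = -1) (htk : t k = 1)
    (htmem : ∀ j ≤ k, t j ∈ Set.Icc (-1:ℝ) 1)
    (htmono : ∀ i j : ℕ, i < j → j ≤ k → t i < t j)
    (htW : ∀ j ≤ k,
      ((k : ℝ) / π) * ∫ s in (-1:ℝ)..(t j), g s / Real.sqrt (1 - s ^ 2) = (j : ℝ))
    (α : ℕ → ℝ) (hα : ∀ j ≤ k, α j = Real.arccos (-(t j)))
    :
    ∀ j : ℕ, j + 2 ≤ k → (α k - α j) / (α k - α (j + 1)) ≤ 4 := by
  intro j hj
  have hπ := Real.pi_pos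
  have hk0 : (0:ℝ) < (k:ℝ) := by exact_mod_cast (by omega : 0 < k)
  set f : ℝ → ℝ := fun s => g s / Real.sqrt (1 - s ^ 2) with hf
  have hjk : j ≤ k := by omega
  have hj1k : j + 1 ≤ k := by omega
  have htj := htmem j hjk
  have htj1 := htmem (j+1) hj1k
  have htjlt : t j < t (j+1) := htmono j (j+1) (by omega) hj1k
  have htj1lt1 : t (j+1) < 1 := by
    have := htmono (j+1) k (by omega) le_rfl
    rwa [htk] at this
  have hαk : α k = π := by
    rw [hα k le_rfl, htk, Real.arccos_neg, Real.arccos_one]; ring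
  have hαred : ∀ i, i ≤ k → α k - α i = Real.arccos (t i) := by
    intro i hi
    rw [hαk, hα i hi, Real.arccos_neg]; ring
  rw [hαred j hjk, hαred (j+1) hj1k]
  set φ := Real.arccos (t (j+1)) with hφ
  have hφpos : 0 < φ := Real.arccos_pos.2 htj1lt1
  rw [div_le_iff₀ hφpos]
  by_cases hcase : π ≤ 4 * φ
  · exact le_trans (Real.arccos_le_pi _) hcase
  push_neg at hcase
  by_contra hcon
  push_neg at hcon
  -- hcon : 4 * φ < arccos (t j)
  exfalso
  -- measurability of f
  set G : ℝ → ℝ := fun x => g (max (-1) (min 1 x)) with hG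
  have hclampmem : ∀ x : ℝ, max (-1) (min 1 x) ∈ Set.Icc (-1:ℝ) 1 :=
    fun x => ⟨le_max_left _ _, max_le (by norm_num) (min_le_left _ _)⟩
  have hGmono : Monotone G := by
    intro x y hxy
    exact hgmono (hclampmem x) (hclampmem y)
      (max_le_max le_rfl (min_le_min le_rfl hxy))
  have hGeq : ∀ x ∈ Set.Icc (-1:ℝ) 1, G x = g x := by
    intro x hx
    simp only [hG]
    rw [min_eq_right hx.2, max_eq_right hx.1]
  have hfmeas : AEStronglyMeasurable f (volume.restrict (Set.uIoc (-1:ℝ) 1)) := by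
    have hFm : Measurable (fun s => G s / Real.sqrt (1 - s ^ 2)) :=
      hGmono.measurable.div ((continuous_const.sub (continuous_pow 2)).sqrt.measurable)
    apply hFm.aestronglyMeasurable.congr
    filter_upwards [ae_restrict_mem measurableSet_uIoc] with x hx
    rw [Set.uIoc_of_le (by norm_num : (-1:ℝ) ≤ 1)] at hx
    simp only [hf]
    rw [hGeq x ⟨hx.1.le, hx.2⟩]
  have hfint : IntervalIntegrable f volume (-1) 1 := by
    apply (aux_inv_sqrt_intInt.const_mul (g 1)).mono_fun' hfmeas
    filter_upwards [ae_restrict_mem measurableSet_uIoc] with x hx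
    rw [Set.uIoc_of_le (by norm_num : (-1:ℝ) ≤ 1)] at hx
    have hx' : x ∈ Set.Icc (-1:ℝ) 1 := ⟨hx.1.le, hx.2⟩
    have h0 : 0 ≤ f x := div_nonneg (hg0 x hx') (Real.sqrt_nonneg _)
    rw [Real.norm_eq_abs, abs_of_nonneg h0]
    have hgx : g x ≤ g 1 := hgmono hx' ⟨by norm_num, le_rfl⟩ hx'.2
    calc f x = g x * (Real.sqrt (1 - x ^ 2))⁻¹ := div_eq_mul_inv _ _
      _ ≤ g 1 * (Real.sqrt (1 - x ^ 2))⁻¹ :=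
          mul_le_mul_of_nonneg_right hgx (by positivity)
      _ = g 1 * (1 / Real.sqrt (1 - x ^ 2)) := by rw [one_div]
  have hsub : ∀ a b : ℝ, a ∈ Set.Icc (-1:ℝ) 1 → b ∈ Set.Icc (-1:ℝ) 1 →
      IntervalIntegrable f volume a b := by
    intro a b ha hb
    apply hfint.mono_set
    rw [Set.uIcc_of_le (by norm_num : (-1:ℝ) ≤ 1)]
    exact Set.uIcc_subset_Icc ha hb
  have htotal : ∫ s in (-1:ℝ)..1, f s = π := by
    rw [one_div, inv_mul_eq_div, div_eq_one_iff_eq (ne_of_gt hπ)] at hnorm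
    exact hnorm
  have hg1 : 0 < g 1 := by
    by_contra hg1
    push_neg at hg1
    have hzero : Set.EqOn f (fun _ => (0:ℝ)) (Set.uIcc (-1:ℝ) 1) := by
      intro x hx
      rw [Set.uIcc_of_le (by norm_num : (-1:ℝ) ≤ 1)] at hx
      have h1 := hg0 x hx
      have h2 : g x ≤ g 1 := hgmono hx ⟨by norm_num, le_rfl⟩ hx.2
      have hx0 : g x = 0 := le_antisymm (by linarith) h1
      simp [hf, hx0]
    have h0 := intervalIntegral.integral_congr (μ := volume) hzero
    rw [htotal, intervalIntegral.integral_zero] at h0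
    linarith
  have hJ : ∀ i, i ≤ k → ∫ s in (-1:ℝ)..(t i), f s = i * π / k := by
    intro i hi
    have h := htW i hi
    rw [div_mul_eq_mul_div, div_eq_iff (ne_of_gt hπ)] at h
    rw [eq_div_iff (ne_of_gt hk0)]
    linear_combination h
  have hmem1 : (1:ℝ) ∈ Set.Icc (-1:ℝ) 1 := ⟨by norm_num, le_rfl⟩
  have hmemm1 : (-1:ℝ) ∈ Set.Icc (-1:ℝ) 1 := ⟨le_rfl, by norm_num⟩
  have hadd1 := intervalIntegral.integral_add_adjacent_intervals
    (hsub (-1) (t j) hmemm1 htj) (hsub (t j) (t (j+1)) htj htj1)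
  have hadd2 := intervalIntegral.integral_add_adjacent_intervals
    (hsub (-1) (t (j+1)) hmemm1 htj1) (hsub (t (j+1)) 1 htj1 hmem1)
  have hI2 : ∫ s in (t j)..(t (j+1)), f s = π / k := by
    have e1 := hJ j hjk
    have e2 := hJ (j+1) hj1k
    rw [e1, e2] at hadd1
    have heq : ∫ s in (t j)..(t (j+1)), f s = (↑(j+1)) * π / k - (↑j) * π / k := by
      linarith [hadd1]
    rw [heq]
    push_cast
    ring
  have hI3 : π / k ≤ ∫ s in (t (j+1))..1, f s := by
    have e2 := hJ (j+1) hj1k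
    rw [htotal, e2] at hadd2
    have hIval : ∫ s in (t (j+1))..1, f s = π - (↑(j+1)) * π / k := by linarith
    rw [hIval]
    rw [div_le_iff₀ hk0]
    have hjk2 : ((j:ℝ) + 2) ≤ (k:ℝ) := by exact_mod_cast hj
    have : (↑(j+1) : ℝ) * π / k * k = (↑j + 1) * π := by
      push_cast; field_simp
    rw [sub_mul, this]
    nlinarith [hπ.le]
  -- geometric part
  have hφjπ : Real.arccos (t j) ≤ π := Real.arccos_le_pi _
  set c := Real.cos (4 * φ) with hc
  have hφ4pos : 0 < 4 * φ := by linarith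
  have htjc : t j < c := by
    have h := Real.cos_lt_cos_of_nonneg_of_le_pi (le_of_lt hφ4pos) hφjπ hcon
    rwa [Real.cos_arccos htj.1 htj.2] at h
  have hctj1 : c < t (j+1) := by
    have h := Real.cos_lt_cos_of_nonneg_of_le_pi (Real.arccos_nonneg (t (j+1)))
      (by linarith : 4 * φ ≤ π) (by linarith : Real.arccos (t (j+1)) < 4 * φ)
    rwa [Real.cos_arccos htj1.1 htj1.2] at h
  have hcm1 : -1 < c := by
    have h := Real.cos_lt_cos_of_nonneg_of_le_pi (le_of_lt hφ4pos) le_rfl hcase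
    rwa [Real.cos_pi] at h
  have hc1 : c < 1 := lt_trans hctj1 htj1lt1
  have hcmem : c ∈ Set.Icc (-1:ℝ) 1 := ⟨hcm1.le, hc1.le⟩
  have harcsin_t : Real.arcsin (t (j+1)) = π/2 - φ := by
    have h := Real.arccos_eq_pi_div_two_sub_arcsin (t (j+1))
    rw [← hφ] at h
    linarith
  have harccos_c : Real.arccos c = 4 * φ := Real.arccos_cos (le_of_lt hφ4pos) (by linarith)
  have harcsin_c : Real.arcsin c = π/2 - 4*φ := by
    have h := Real.arccos_eq_pi_div_two_sub_arcsin c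
    rw [harccos_c] at h
    linarith
  have hsqrt_t : Real.sqrt (1 - (t (j+1))^2) = Real.sin φ := by
    rw [hφ, ← Real.sin_arccos]
  have hsqrt_c : Real.sqrt (1 - c^2) = Real.sin (4*φ) := by
    rw [← Real.sin_arccos, harccos_c]
  have hH := aux_H_integral hcm1 hctj1.le htj1lt1
  rw [harcsin_t, hsqrt_t, harcsin_c, hsqrt_c] at hH
  have hbint : IntervalIntegrable (fun s : ℝ => (1+s)/Real.sqrt (1 - s^2)) volume c (t (j+1)) := by
    apply ContinuousOn.intervalIntegrable
    apply ContinuousOn.div ((continuous_const.add continuous_id).continuousOn)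
      ((continuous_const.sub (continuous_pow 2)).sqrt.continuousOn)
    intro x hx
    rw [Set.uIcc_of_le hctj1.le] at hx
    have hxa : -1 < x := lt_of_lt_of_le hcm1 hx.1
    have hxb : x < 1 := lt_of_le_of_lt hx.2 htj1lt1
    exact ne_of_gt (Real.sqrt_pos.2 (by show (0:ℝ) < 1 - x ^ 2; nlinarith))
  have hlow : g 1 / 2 * ((π/2 - φ - Real.sin φ) - (π/2 - 4*φ - Real.sin (4*φ)))
      ≤ ∫ s in c..(t (j+1)), f s := by
    rw [← hH, ← intervalIntegral.integral_const_mul]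
    apply intervalIntegral.integral_mono_on hctj1.le (hbint.const_mul _)
      (hsub c (t (j+1)) hcmem htj1)
    intro s hs
    have hs' : s ∈ Set.Icc (-1:ℝ) 1 := ⟨le_trans hcm1.le hs.1, le_trans hs.2 htj1lt1.le⟩
    have hconc := hgconc.2 hmemm1 hmem1
      (show (0:ℝ) ≤ (1-s)/2 by linarith [hs'.2]) (show (0:ℝ) ≤ (1+s)/2 by linarith [hs'.1])
      (show (1-s)/2 + (1+s)/2 = 1 by ring)
    simp only [smul_eq_mul] at hconc
    have hpt : (1-s)/2 * (-1) + (1+s)/2 * 1 = s := by ring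
    rw [hpt] at hconc
    have hnum : g 1 * (1+s)/2 ≤ g s := by
      nlinarith [mul_nonneg (by linarith [hs'.2] : (0:ℝ) ≤ (1-s)/2) (hg0 (-1) hmemm1)]
    have hs0 : (0:ℝ) ≤ (Real.sqrt (1 - s^2))⁻¹ := by positivity
    calc g 1 / 2 * ((1+s)/Real.sqrt (1 - s^2))
        = (g 1 * (1+s)/2) * (Real.sqrt (1 - s^2))⁻¹ := by ring
      _ ≤ g s * (Real.sqrt (1 - s^2))⁻¹ := mul_le_mul_of_nonneg_right hnum hs0
      _ = f s := (div_eq_mul_inv _ _).symm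
  have hmid : ∫ s in c..(t (j+1)), f s ≤ ∫ s in (t j)..(t (j+1)), f s := by
    have hadd := intervalIntegral.integral_add_adjacent_intervals
      (hsub (t j) c htj hcmem) (hsub c (t (j+1)) hcmem htj1)
    have hnn : 0 ≤ ∫ s in (t j)..c, f s := by
      apply intervalIntegral.integral_nonneg htjc.le
      intro u hu
      exact div_nonneg (hg0 u ⟨le_trans htj.1 hu.1, le_trans hu.2 hc1.le⟩) (Real.sqrt_nonneg _)
    linarith
  have hup : ∫ s in (t (j+1))..1, f s ≤ g 1 * φ := by
    have hintb : IntervalIntegrable (fun s : ℝ => g 1 * (1 / Real.sqrt (1 - s^2)))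
        volume (t (j+1)) 1 := by
      apply IntervalIntegrable.const_mul
      apply aux_inv_sqrt_intInt.mono_set
      rw [Set.uIcc_of_le (by norm_num : (-1:ℝ) ≤ 1)]
      exact Set.uIcc_subset_Icc htj1 hmem1
    have h1 : ∫ s in (t (j+1))..1, f s ≤ ∫ s in (t (j+1))..1, g 1 * (1 / Real.sqrt (1 - s^2)) := by
      apply intervalIntegral.integral_mono_on htj1lt1.le (hsub (t (j+1)) 1 htj1 hmem1) hintb
      intro s hs
      have hs' : s ∈ Set.Icc (-1:ℝ) 1 := ⟨le_trans htj1.1 hs.1, hs.2⟩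
      have hgx : g s ≤ g 1 := hgmono hs' hmem1 hs'.2
      calc f s = g s * (Real.sqrt (1 - s^2))⁻¹ := div_eq_mul_inv _ _
        _ ≤ g 1 * (Real.sqrt (1 - s^2))⁻¹ := mul_le_mul_of_nonneg_right hgx (by positivity)
        _ = g 1 * (1 / Real.sqrt (1 - s^2)) := by rw [one_div]
    have h2 : ∫ s in (t (j+1))..1, g 1 * (1 / Real.sqrt (1 - s^2)) = g 1 * φ := by
      rw [intervalIntegral.integral_const_mul, aux_arcsin_integral htj1.1 htj1lt1.le le_rfl,
        Real.arcsin_one, harcsin_t]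
      ring
    linarith
  have hkey : g 1 / 2 * ((π/2 - φ - Real.sin φ) - (π/2 - 4*φ - Real.sin (4*φ))) ≤ g 1 * φ := by
    linarith [hlow, hmid, hI2, hI3, hup]
  have hA : 3*φ - Real.sin φ + Real.sin (4*φ) ≤ 2*φ := by nlinarith [hg1, hkey]
  have hsin4 : 0 < Real.sin (4*φ) := Real.sin_pos_of_pos_of_lt_pi hφ4pos hcase
  have hsinφ : Real.sin φ < φ := Real.sin_lt hφpos
  linarith
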